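/- (Two Pencils Inequality, case a) Let 𝓛 be a configuration of d mutually distinct lines in the projective plane over a field K with exactly s singular points, s ≥ 2, and let P_1 and P_2 be two distinct singular points of 𝓛 such that no line of 𝓛 passes through both P_1 and P_2. Then m_𝓛(P_1)·m_𝓛(P_2) + 2 ≤ s. -/

import Mathlib

/-- Points of the projective plane over `K`. -/
abbrev PPoint (K : Type*) [Field K] := Projectivization K (Fin 3 → K)

/-- Lines of the projective plane over `K`: points of the projectivization of the dual space. -/
abbrev PLine (K : Type*) [Field K] := Projectivization K (Module.Dual K (Fin 3 → K))

/-- A point lies on a line iff a representative functional of the line vanishes on a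
representative vector of the point. -/
def OnLine {K : Type*} [Field K] (P : PPoint K) (L : PLine K) : Prop :=
  L.rep P.rep = 0

/-- The multiplicity of a point `P` with respect to a configuration `𝓛`:
the number of lines of `𝓛` passing through `P`. -/
noncomputable def mult {K : Type*} [Field K] (𝓛 : Finset (PLine K)) (P : PPoint K) : ℕ :=
  {L : PLine K | L ∈ 𝓛 ∧ OnLine P L}.ncard

/-- The singular points of a configuration: points lying on at least two of its lines. -/
def SingPts {K : Type*} [Field K] (𝓛 : Finset (PLine K)) : Set (PPoint K) :=
  {P | 2 ≤ mult 𝓛 P}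

/-- `tk 𝓛 k` is the number of points of multiplicity exactly `k` (used for `k ≥ 2`). -/
noncomputable def tk {K : Type*} [Field K] (𝓛 : Finset (PLine K)) (k : ℕ) : ℕ :=
  {P : PPoint K | mult 𝓛 P = k}.ncard

/-- The linear Harbourne constant of a configuration `𝓛` of lines:
`(d² − Σ_P m_𝓛(P)²)/s` where the sum runs over the `s` singular points of `𝓛`. -/
noncomputable def HL {K : Type*} [Field K] (𝓛 : Finset (PLine K)) : ℚ :=
  ((𝓛.card : ℚ) ^ 2 - ∑ᶠ P ∈ SingPts 𝓛, (mult 𝓛 P : ℚ) ^ 2) / ((SingPts 𝓛).ncard : ℚ)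

open Module Submodule

/-- Any two lines of the projective plane meet in at least one point. -/
theorem exists_point_on_lines {K : Type*} [Field K] (L M : PLine K) :
    ∃ Q : PPoint K, OnLine Q L ∧ OnLine Q M := by
  set f := L.rep
  set g := M.rep
  have hker : ∀ h : Module.Dual K (Fin 3 → K), 2 ≤ Module.finrank K (LinearMap.ker h) := by
    intro h
    have := h.finrank_range_add_finrank_ker
    have hr : Module.finrank K (LinearMap.range h) ≤ 1 := by
      simpa using (LinearMap.range h).finrank_le
    have h3 : Module.finrank K (Fin 3 → K) = 3 := by simp
    omega
  have hsup : Module.finrank K ↥(LinearMap.ker f ⊔ LinearMap.ker g) ≤ 3 := by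
    simpa using (LinearMap.ker f ⊔ LinearMap.ker g).finrank_le
  have hsum := Submodule.finrank_sup_add_finrank_inf_eq (LinearMap.ker f) (LinearMap.ker g)
  have h1 : 1 ≤ Module.finrank K ↥(LinearMap.ker f ⊓ LinearMap.ker g) := by
    have := hker f; have := hker g; omega
  have hne : LinearMap.ker f ⊓ LinearMap.ker g ≠ ⊥ := by
    intro hbot
    rw [hbot] at h1; simp at h1
  obtain ⟨v, hv, hv0⟩ := Submodule.exists_mem_ne_zero_of_ne_bot hne
  refine ⟨Projectivization.mk K v hv0, ?_, ?_⟩ <;>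
  · obtain ⟨a, ha⟩ := Projectivization.exists_smul_eq_mk_rep K v hv0
    unfold OnLine
    rw [← ha, Units.smul_def, map_smul]
    first
      | rw [show f v = 0 from hv.1]; simp
      | rw [show g v = 0 from hv.2]; simp

/-- Two distinct points lie on at most one common line. -/
theorem eq_line_of_two_points {K : Type*} [Field K] {L M : PLine K} {P Q : PPoint K}
    (hPQ : P ≠ Q) (hPL : OnLine P L) (hQL : OnLine Q L) (hPM : OnLine P M)
    (hQM : OnLine Q M) : L = M := by
  have hv0 : P.rep ≠ 0 := Projectivization.rep_nonzero P
  have hw0 : Q.rep ≠ 0 := Projectivization.rep_nonzero Q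
  have hli : LinearIndependent K ![P.rep, Q.rep] := by
    rw [LinearIndependent.pair_iff' hv0]
    intro a ha
    rcases eq_or_ne a 0 with h0 | h0
    · exact hw0 (by rw [← ha, h0, zero_smul])
    apply hPQ
    rw [← Projectivization.mk_rep P, ← Projectivization.mk_rep Q,
      Projectivization.mk_eq_mk_iff']
    exact ⟨a⁻¹, by rw [← ha, smul_smul, inv_mul_cancel₀ h0, one_smul]⟩
  set U : Submodule K (Fin 3 → K) := Submodule.span K {P.rep, Q.rep} with hU
  have hrange : Set.range ![P.rep, Q.rep] = {P.rep, Q.rep} := by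
    ext x; simp [Fin.exists_fin_two, or_comm]
  have hU2 : Module.finrank K U = 2 := by
    have h := finrank_span_eq_card hli
    rw [hrange] at h
    simpa using h
  have hq : Module.finrank K (U.dualAnnihilator) = 1 := by
    have e := LinearEquiv.finrank_eq (R := K) (M := (Fin 3 → K) ⧸ U)
      (N := U.dualAnnihilator) (Subspace.quotEquivAnnihilator U)
    have hq2 := Submodule.finrank_quotient_add_finrank U
    have h3 : Module.finrank K (Fin 3 → K) = 3 := by simp
    omega
  have hmem : ∀ N : PLine K, OnLine P N → OnLine Q N → N.rep ∈ U.dualAnnihilator := by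
    intro N h1 h2
    rw [Submodule.mem_dualAnnihilator]
    intro x hx
    rw [hU, Submodule.mem_span_pair] at hx
    obtain ⟨a, b, rfl⟩ := hx
    unfold OnLine at h1 h2
    simp [h1, h2]
  have hLne : (⟨L.rep, hmem L hPL hQL⟩ : U.dualAnnihilator) ≠ 0 := by
    simp [Submodule.mk_eq_zero, Projectivization.rep_nonzero L]
  obtain ⟨c, hc⟩ := (finrank_eq_one_iff_of_nonzero' (K := K) (V := U.dualAnnihilator) _ hLne).mp hq ⟨M.rep, hmem M hPM hQM⟩
  have hc' : c • L.rep = M.rep := congrArg Subtype.val hc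
  symm
  rw [← Projectivization.mk_rep L, ← Projectivization.mk_rep M,
    Projectivization.mk_eq_mk_iff']
  exact ⟨c, hc'⟩

theorem mult_eq_card_filter {K : Type*} [Field K] (𝓛 : Finset (PLine K)) (P : PPoint K)
    [DecidablePred (OnLine P ·)] :
    mult 𝓛 P = (𝓛.filter (fun L => OnLine P L)).card := by
  rw [mult, show {L : PLine K | L ∈ 𝓛 ∧ OnLine P L} = ↑(𝓛.filter (fun L => OnLine P L)) by
    ext L; simp [Finset.mem_filter], Set.ncard_coe_finset]

/-- Two Pencils Inequality, case a): if no configuration line passes through both singular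
points `P₁` and `P₂`, then `m(P₁)·m(P₂) + 2 ≤ s`. -/
theorem two_pencils_a {K : Type*} [Field K] (d s : ℕ) (𝓛 : Finset (PLine K))
    (hd : 𝓛.card = d) (hs : (SingPts 𝓛).ncard = s) (hs2 : 2 ≤ s)
    (P₁ P₂ : PPoint K) (h1 : P₁ ∈ SingPts 𝓛) (h2 : P₂ ∈ SingPts 𝓛) (hne : P₁ ≠ P₂)
    (hnoline : ¬ ∃ L ∈ 𝓛, OnLine P₁ L ∧ OnLine P₂ L) :
    mult 𝓛 P₁ * mult 𝓛 P₂ + 2 ≤ s := by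
  classical
  -- the pencils at P₁ and P₂
  set 𝓛₁ := 𝓛.filter (fun L => OnLine P₁ L) with h𝓛₁
  set 𝓛₂ := 𝓛.filter (fun L => OnLine P₂ L) with h𝓛₂
  have hm1 : mult 𝓛 P₁ = 𝓛₁.card := mult_eq_card_filter 𝓛 P₁
  have hm2 : mult 𝓛 P₂ = 𝓛₂.card := mult_eq_card_filter 𝓛 P₂
  -- the intersection-point map
  let F : PLine K × PLine K → PPoint K := fun p => (exists_point_on_lines p.1 p.2).choose
  have hF1 : ∀ p : PLine K × PLine K, OnLine (F p) p.1 :=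
    fun p => (exists_point_on_lines p.1 p.2).choose_spec.1
  have hF2 : ∀ p : PLine K × PLine K, OnLine (F p) p.2 :=
    fun p => (exists_point_on_lines p.1 p.2).choose_spec.2
  -- properties of intersection points of pencil lines
  have hQne1 : ∀ p ∈ 𝓛₁ ×ˢ 𝓛₂, F p ≠ P₁ := by
    rintro ⟨L, M⟩ hp hQ
    simp only [Finset.mem_product, h𝓛₁, h𝓛₂, Finset.mem_filter] at hp
    exact hnoline ⟨M, hp.2.1, hQ ▸ hF2 (L, M), hp.2.2⟩
  have hQne2 : ∀ p ∈ 𝓛₁ ×ˢ 𝓛₂, F p ≠ P₂ := by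
    rintro ⟨L, M⟩ hp hQ
    simp only [Finset.mem_product, h𝓛₁, h𝓛₂, Finset.mem_filter] at hp
    exact hnoline ⟨L, hp.1.1, hp.1.2, hQ ▸ hF1 (L, M)⟩
  have hQsing : ∀ p ∈ 𝓛₁ ×ˢ 𝓛₂, F p ∈ SingPts 𝓛 := by
    rintro ⟨L, M⟩ hp
    simp only [Finset.mem_product, h𝓛₁, h𝓛₂, Finset.mem_filter] at hp
    have hLM : L ≠ M := by
      rintro rfl
      exact hnoline ⟨L, hp.1.1, hp.1.2, hp.2.2⟩
    have hsub : ({L, M} : Finset (PLine K)) ⊆ 𝓛.filter (fun N => OnLine (F (L, M)) N) := by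
      intro N hN
      rcases Finset.mem_insert.mp hN with h | hN
      · rw [h]; exact Finset.mem_filter.mpr ⟨hp.1.1, hF1 (L, M)⟩
      · rw [Finset.mem_singleton] at hN
        rw [hN]
        exact Finset.mem_filter.mpr ⟨hp.2.1, hF2 (L, M)⟩
    have h2card : ({L, M} : Finset (PLine K)).card = 2 := Finset.card_pair hLM
    have := Finset.card_le_card hsub
    rw [h2card] at this
    rw [SingPts, Set.mem_setOf_eq, mult_eq_card_filter]
    exact this
  -- injectivity
  have hinj : Set.InjOn F (𝓛₁ ×ˢ 𝓛₂ : Finset (PLine K × PLine K)) := by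
    rintro ⟨L, M⟩ hp ⟨L', M'⟩ hp' hEq
    have hp0 := hp; have hp0' := hp'
    simp only [Finset.coe_product, Finset.mem_coe] at hp hp'
    have hpm : (L, M) ∈ 𝓛₁ ×ˢ 𝓛₂ := by
      simpa using hp
    have hpm' : (L', M') ∈ 𝓛₁ ×ˢ 𝓛₂ := by
      simpa using hp'
    have h1L : OnLine P₁ L := (Finset.mem_filter.mp (Finset.mem_product.mp hpm).1).2
    have h1L' : OnLine P₁ L' := (Finset.mem_filter.mp (Finset.mem_product.mp hpm').1).2
    have h2M : OnLine P₂ M := (Finset.mem_filter.mp (Finset.mem_product.mp hpm).2).2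
    have h2M' : OnLine P₂ M' := (Finset.mem_filter.mp (Finset.mem_product.mp hpm').2).2
    have hQ1 : F (L, M) ≠ P₁ := hQne1 _ hpm
    have hQ2 : F (L, M) ≠ P₂ := hQne2 _ hpm
    have hLL' : L = L' := by
      refine eq_line_of_two_points hQ1.symm h1L (hF1 (L, M)) h1L' ?_
      rw [hEq]; exact hF1 (L', M')
    have hMM' : M = M' := by
      refine eq_line_of_two_points hQ2.symm h2M (hF2 (L, M)) h2M' ?_
      rw [hEq]; exact hF2 (L', M')
    simp [hLL', hMM']
  -- finiteness of SingPts
  have hfin : (SingPts 𝓛).Finite := by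
    apply Set.finite_of_ncard_ne_zero
    omega
  -- assemble the count
  set T : Finset (PPoint K) := (𝓛₁ ×ˢ 𝓛₂).image F with hT
  have hTcard : T.card = 𝓛₁.card * 𝓛₂.card := by
    rw [hT, Finset.card_image_of_injOn hinj, Finset.card_product]
  have hP1T : P₁ ∉ T := by
    rw [hT]
    simp only [Finset.mem_image, not_exists]
    rintro p ⟨hp, hFp⟩
    exact hQne1 p hp hFp
  have hP2T : P₂ ∉ T := by
    rw [hT]
    simp only [Finset.mem_image, not_exists]
    rintro p ⟨hp, hFp⟩
    exact hQne2 p hp hFp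
  have hsub : insert P₁ (insert P₂ T) ⊆ hfin.toFinset := by
    intro Q hQ
    rw [Set.Finite.mem_toFinset]
    rcases Finset.mem_insert.mp hQ with rfl | hQ
    · exact h1
    rcases Finset.mem_insert.mp hQ with rfl | hQ
    · exact h2
    obtain ⟨p, hp, rfl⟩ := Finset.mem_image.mp hQ
    exact hQsing p hp
  have hcard : (insert P₁ (insert P₂ T)).card = T.card + 2 := by
    rw [Finset.card_insert_of_notMem (by simp [hne, hP1T]),
      Finset.card_insert_of_notMem hP2T]
  have hle := Finset.card_le_card hsub
  rw [hcard, hTcard] at hle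
  have hsToFinset : hfin.toFinset.card = s := by
    rw [← Set.ncard_eq_toFinset_card _ hfin, hs]
  rw [hm1, hm2]
  omega
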